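/- Let Φ : 𝕋² → 𝕋² be measure-preserving, let A, A' ⊂ 𝕋² be the left and right halves of the torus, and suppose that for some ε > 0 and κ ∈ (0,1): for every x ∈ A, |B(ε, Φ(x)) ∩ Φ(A')| ≥ κ|B(ε, Φ(x))|. Suppose also there is H ⊂ 𝕋² with |H| ≤ η and Φ^{-1} restricted to 𝕋² \ H is M-Lipschitz, where (5²/κ)η + η < 1/6. Then ε ≥ 1/(6M). -/
import Mathlib


open MeasureTheory

/-- The two-dimensional unit torus. -/
abbrev Torus2 := AddCircle (1:ℝ) × AddCircle (1:ℝ)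

/-- The left half `A = [0,1/2) × [0,1)` of the torus. -/
noncomputable def leftHalf : Set Torus2 :=
  {p : Torus2 | ∃ x ∈ Set.Ico (0:ℝ) (1/2), ∃ y ∈ Set.Ico (0:ℝ) 1,
    p = ((x : AddCircle (1:ℝ)), (y : AddCircle (1:ℝ)))}

/-- The right half `A' = [1/2,1) × [0,1)` of the torus. -/
noncomputable def rightHalf : Set Torus2 :=
  {p : Torus2 | ∃ x ∈ Set.Ico (1/2:ℝ) 1, ∃ y ∈ Set.Ico (0:ℝ) 1,
    p = ((x : AddCircle (1:ℝ)), (y : AddCircle (1:ℝ)))}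

section Aux

open Metric Set

lemma exists_rep_Ico (θ : AddCircle (1:ℝ)) :
    ∃ a : ℝ, a ∈ Set.Ico (0:ℝ) 1 ∧ (a : AddCircle (1:ℝ)) = θ := by
  refine ⟨(AddCircle.equivIco (1:ℝ) 0 θ : ℝ), ?_, ?_⟩
  · have := (AddCircle.equivIco (1:ℝ) 0 θ).2
    simpa using this
  · exact (AddCircle.equivIco (1:ℝ) 0).symm_apply_apply θ

lemma circle_dist_eq (a b : ℝ) :
    dist ((a : AddCircle (1:ℝ))) (b : AddCircle (1:ℝ)) = |(a - b) - round (a - b)| := by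
  rw [dist_eq_norm, ← QuotientAddGroup.mk_sub]
  exact UnitAddCircle.norm_eq

lemma circle_dist_lower {a b : ℝ} (ha : a ∈ Set.Icc (1/6:ℝ) (1/3)) (hb : b ∈ Set.Ico (1/2:ℝ) 1) :
    (1/6:ℝ) ≤ dist ((a : AddCircle (1:ℝ))) (b : AddCircle (1:ℝ)) := by
  rw [circle_dist_eq a b]
  set k := round (a - b) with hk
  rcases le_or_gt k (-1) with h | h
  · have hk' : (k:ℝ) ≤ -1 := by exact_mod_cast h
    have : (1/6:ℝ) ≤ (a - b) - k := by
      have := ha.1; have := hb.2; linarith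
    exact this.trans (le_abs_self _)
  · have h0 : (0:ℤ) ≤ k := by omega
    have hk' : (0:ℝ) ≤ (k:ℝ) := by exact_mod_cast h0
    have : (1/6:ℝ) ≤ -((a - b) - k) := by
      have := ha.2; have := hb.1; linarith
    exact this.trans (neg_le_abs _)

lemma volume_ball_addCircle (y : AddCircle (1:ℝ)) {r : ℝ} (hr : 0 < r) :
    volume (Metric.ball y r) = ENNReal.ofReal (min 1 (2*r)) := by
  apply le_antisymm
  · calc volume (Metric.ball y r) ≤ volume (Metric.closedBall y r) :=
          measure_mono Metric.ball_subset_closedBall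
      _ = ENNReal.ofReal (min 1 (2*r)) := AddCircle.volume_closedBall 1 r
  · refine ENNReal.le_of_forall_pos_le_add fun ε' hε' _ => ?_
    set δ : ℝ := min (r/2) ((ε' : ℝ)/4) with hδdef
    have hε'pos : (0:ℝ) < ε' := hε'
    have hδpos : 0 < δ := by positivity
    have hδr : δ ≤ r/2 := min_le_left _ _
    have hδε : δ ≤ (ε':ℝ)/4 := min_le_right _ _
    have h1 : ENNReal.ofReal (min 1 (2*(r-δ))) ≤ volume (Metric.ball y r) := by
      rw [← AddCircle.volume_closedBall 1 (x := y) (r - δ)]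
      exact measure_mono (Metric.closedBall_subset_ball (by linarith))
    have h2 : min 1 (2*r) ≤ min 1 (2*(r-δ)) + 2*δ := by
      rcases le_total (1:ℝ) (2*(r-δ)) with h | h
      · rw [min_eq_left h]
        have := min_le_left (1:ℝ) (2*r); linarith
      · rw [min_eq_right h]
        have := min_le_right (1:ℝ) (2*r); linarith
    calc ENNReal.ofReal (min 1 (2*r)) ≤ ENNReal.ofReal (min 1 (2*(r-δ)) + 2*δ) :=
          ENNReal.ofReal_le_ofReal h2
      _ ≤ ENNReal.ofReal (min 1 (2*(r-δ))) + ENNReal.ofReal (2*δ) := ENNReal.ofReal_add_le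
      _ ≤ volume (Metric.ball y r) + ε' := by
          refine add_le_add h1 ?_
          rw [← ENNReal.ofReal_coe_nnreal]
          exact ENNReal.ofReal_le_ofReal (by linarith)

lemma volume_ball_torus (p : Torus2) {r : ℝ} (hr : 0 < r) :
    volume (Metric.ball p r)
      = ENNReal.ofReal (min 1 (2*r)) * ENNReal.ofReal (min 1 (2*r)) := by
  obtain ⟨p1, p2⟩ := p
  rw [← ball_prod_same, Measure.volume_eq_prod, MeasureTheory.Measure.prod_prod,
    volume_ball_addCircle _ hr, volume_ball_addCircle _ hr]

lemma volume_closedBall_torus (p : Torus2) (r : ℝ) :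
    volume (Metric.closedBall p r)
      = ENNReal.ofReal (min 1 (2*r)) * ENNReal.ofReal (min 1 (2*r)) := by
  obtain ⟨p1, p2⟩ := p
  rw [← closedBall_prod_same, Measure.volume_eq_prod, MeasureTheory.Measure.prod_prod,
    AddCircle.volume_closedBall 1 r, AddCircle.volume_closedBall 1 r]

lemma covering_bound {κ ε : ℝ} (hκ : 0 < κ) (hε : 0 < ε) (H : Set Torus2)
    (hHm : MeasurableSet H) :
    ∃ U : Set Torus2, MeasurableSet U ∧
      {y : Torus2 | ENNReal.ofReal κ * volume (Metric.ball y ε) ≤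
        volume (Metric.ball y ε ∩ H)} ⊆ U ∧
      ENNReal.ofReal κ * volume U ≤ 25 * volume H := by
  set c := ENNReal.ofReal κ with hc
  set D := {y : Torus2 | c * volume (Metric.ball y ε) ≤ volume (Metric.ball y ε ∩ H)} with hD
  obtain ⟨u, huD, hdisj, hcov⟩ :=
    Vitali.exists_disjoint_subfamily_covering_enlargement_closedBall D
      (id : Torus2 → Torus2) (fun _ => ε) ε (fun _ _ => le_rfl) 5 (by norm_num)
  have hballpos : ∀ y : Torus2, 0 < volume (Metric.ball y ε) := by
    intro y
    rw [volume_ball_torus y hε]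
    have : 0 < min (1:ℝ) (2*ε) := by positivity
    exact ENNReal.mul_pos (ENNReal.ofReal_pos.2 this).ne' (ENNReal.ofReal_pos.2 this).ne'
  have hcpos : 0 < c := ENNReal.ofReal_pos.2 hκ
  have hdisj' : Pairwise (Function.onFun Disjoint
      (fun b : u => Metric.ball (b : Torus2) ε ∩ H)) := by
    intro i j hij
    have h := hdisj i.2 j.2 (fun h => hij (Subtype.ext h))
    exact (h.mono (inter_subset_left.trans ball_subset_closedBall)
      (inter_subset_left.trans ball_subset_closedBall))
  have hcnt : u.Countable := by
    have hmble : ∀ b : u, MeasurableSet (Metric.ball (b : Torus2) ε ∩ H) :=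
      fun b => measurableSet_ball.inter hHm
    have hfin : volume (⋃ b : u, Metric.ball (b : Torus2) ε ∩ H) ≠ ⊤ :=
      (measure_lt_top _ _).ne
    have := MeasureTheory.Measure.countable_meas_pos_of_disjoint_of_meas_iUnion_ne_top
      (volume : Measure Torus2) hmble hdisj' hfin
    have huniv : {i : ↥u | 0 < volume (Metric.ball (i : Torus2) ε ∩ H)} = univ := by
      ext b
      simp only [mem_setOf_eq, mem_univ, iff_true]
      calc (0:ENNReal) < c * volume (Metric.ball (b : Torus2) ε) :=
            ENNReal.mul_pos hcpos.ne' (hballpos _).ne'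
        _ ≤ volume (Metric.ball (b : Torus2) ε ∩ H) := huD b.2
    rw [huniv] at this
    have : Countable u := countable_univ_iff.mp this
    exact countable_coe_iff.mp this
  haveI : Countable u := hcnt.to_subtype
  refine ⟨⋃ b ∈ u, Metric.closedBall b (5*ε), ?_, ?_, ?_⟩
  · exact MeasurableSet.biUnion hcnt fun _ _ => measurableSet_closedBall
  · intro y hy
    obtain ⟨b, hb, hsub⟩ := hcov y hy
    exact mem_biUnion hb (hsub (mem_closedBall_self (by linarith)))
  · have key : ∀ b : u, c * volume (Metric.closedBall (b : Torus2) (5*ε)) ≤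
        25 * volume (Metric.ball (b : Torus2) ε ∩ H) := by
      intro b
      have h1 : volume (Metric.closedBall (b : Torus2) (5*ε)) ≤
          25 * volume (Metric.ball (b : Torus2) ε) := by
        rw [volume_closedBall_torus _ (5*ε), volume_ball_torus _ hε]
        have hmin : min 1 (2*(5*ε)) ≤ 5 * min 1 (2*ε) := by
          rcases le_total (1:ℝ) (2*ε) with h | h
          · rw [min_eq_left h]
            have := min_le_left (1:ℝ) (2*(5*ε)); linarith
          · rw [min_eq_right h]
            have := min_le_right (1:ℝ) (2*(5*ε)); linarith
        have h5 : ENNReal.ofReal (min 1 (2*(5*ε))) ≤ 5 * ENNReal.ofReal (min 1 (2*ε)) := by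
          calc ENNReal.ofReal (min 1 (2*(5*ε))) ≤ ENNReal.ofReal (5 * min 1 (2*ε)) :=
                ENNReal.ofReal_le_ofReal hmin
            _ = ENNReal.ofReal 5 * ENNReal.ofReal (min 1 (2*ε)) :=
                ENNReal.ofReal_mul (by norm_num)
            _ = 5 * ENNReal.ofReal (min 1 (2*ε)) := by norm_num
        calc ENNReal.ofReal (min 1 (2*(5*ε))) * ENNReal.ofReal (min 1 (2*(5*ε)))
            ≤ (5 * ENNReal.ofReal (min 1 (2*ε))) * (5 * ENNReal.ofReal (min 1 (2*ε))) :=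
              mul_le_mul' h5 h5
          _ = 25 * (ENNReal.ofReal (min 1 (2*ε)) * ENNReal.ofReal (min 1 (2*ε))) := by ring
      calc c * volume (Metric.closedBall (b : Torus2) (5*ε))
          ≤ c * (25 * volume (Metric.ball (b : Torus2) ε)) := mul_le_mul_right h1 _
        _ = 25 * (c * volume (Metric.ball (b : Torus2) ε)) := by ring
        _ ≤ 25 * volume (Metric.ball (b : Torus2) ε ∩ H) := mul_le_mul_right (huD b.2) _
    calc c * volume (⋃ b ∈ u, Metric.closedBall b (5*ε))
        ≤ c * ∑' b : u, volume (Metric.closedBall (b : Torus2) (5*ε)) :=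
          mul_le_mul_right (measure_biUnion_le volume hcnt _) _
      _ = ∑' b : u, c * volume (Metric.closedBall (b : Torus2) (5*ε)) :=
          ENNReal.tsum_mul_left.symm
      _ ≤ ∑' b : u, 25 * volume (Metric.ball (b : Torus2) ε ∩ H) :=
          ENNReal.tsum_le_tsum key
      _ = 25 * ∑' b : u, volume (Metric.ball (b : Torus2) ε ∩ H) := ENNReal.tsum_mul_left
      _ = 25 * volume (⋃ b : u, Metric.ball (b : Torus2) ε ∩ H) := by
          rw [measure_iUnion hdisj' fun b => measurableSet_ball.inter hHm]
      _ ≤ 25 * volume H := mul_le_mul_right (measure_mono (iUnion_subset fun b =>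
          inter_subset_right)) _

end Aux

/-- Geometric mixing lower bound from Lusin–Lipschitz regularity of the inverse
flow: if `Φ` is measure preserving, every ball `B(Φ(x),ε)`, `x ∈ A`, contains a
`κ`-fraction of `Φ(A')`, and the inverse `Ψ = Φ⁻¹` is `M`-Lipschitz off an
exceptional set `H` of measure at most `η` with `(5²/κ)η + η < 1/6`, then
`ε ≥ 1/(6M)`. -/
theorem geometric_mixing_lower_bound (Φ Ψ : Torus2 → Torus2) (ε κ η M : ℝ)
    (hε : 0 < ε) (hκ : κ ∈ Set.Ioo (0:ℝ) 1) (hM : 0 < M)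
    (hmp : MeasurePreserving Φ (volume : Measure Torus2) volume)
    (hΨΦ : ∀ p, Ψ (Φ p) = p) (hΦΨ : ∀ p, Φ (Ψ p) = p)
    (H : Set Torus2) (hHm : MeasurableSet H) (hH : volume H ≤ ENNReal.ofReal η)
    (hΨ_lip : LipschitzOnWith (Real.toNNReal M) Ψ Hᶜ)
    (hsmall : (5 ^ 2 / κ) * η + η < 1 / 6)
    (hmix : ∀ p ∈ leftHalf, ENNReal.ofReal κ * volume (Metric.ball (Φ p) ε)
      ≤ volume (Metric.ball (Φ p) ε ∩ (Φ '' rightHalf))) :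
    1 / (6 * M) ≤ ε := by
  classical
  set c := ENNReal.ofReal κ with hc
  have hc0 : c ≠ 0 := (ENNReal.ofReal_pos.2 hκ.1).ne'
  have hctop : c ≠ ⊤ := ENNReal.ofReal_ne_top
  obtain ⟨U, hUm, hDU, hUbound⟩ := covering_bound hκ.1 hε H hHm
  -- the bad set
  set Bad : Set Torus2 := Φ ⁻¹' U ∪ Φ ⁻¹' H with hBad
  have hvolU : volume U ≤ c⁻¹ * (25 * volume H) := by
    have := mul_le_mul_right hUbound c⁻¹
    rwa [← mul_assoc, ENNReal.inv_mul_cancel hc0 hctop, one_mul] at this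
  have hvolBad : volume Bad < ENNReal.ofReal (1/6) := by
    have h1 : volume Bad ≤ volume (Φ ⁻¹' U) + volume (Φ ⁻¹' H) := measure_union_le _ _
    rw [hmp.measure_preimage hUm.nullMeasurableSet,
      hmp.measure_preimage hHm.nullMeasurableSet] at h1
    have h2 : volume Bad ≤ c⁻¹ * (25 * ENNReal.ofReal η) + ENNReal.ofReal η := by
      refine h1.trans (add_le_add (hvolU.trans ?_) hH)
      exact mul_le_mul_right (mul_le_mul_right hH _) _
    rcases le_or_gt η 0 with hη | hη
    · have : ENNReal.ofReal η = 0 := ENNReal.ofReal_eq_zero.2 hη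
      rw [this] at h2
      simp only [mul_zero, add_zero] at h2
      exact h2.trans_lt (ENNReal.ofReal_pos.2 (by norm_num))
    · have heq : c⁻¹ * (25 * ENNReal.ofReal η) + ENNReal.ofReal η
          = ENNReal.ofReal (κ⁻¹ * (25 * η) + η) := by
        have h25 : (25:ENNReal) = ENNReal.ofReal 25 := by norm_num
        rw [ENNReal.ofReal_add (by have h := hκ.1; positivity) hη.le, hc, ← ENNReal.ofReal_inv_of_pos hκ.1,
          h25, ← ENNReal.ofReal_mul (by norm_num : (0:ℝ) ≤ 25),
          ← ENNReal.ofReal_mul (by have h := hκ.1; positivity)]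
      rw [heq] at h2
      refine h2.trans_lt ?_
      rw [ENNReal.ofReal_lt_ofReal_iff (by norm_num)]
      have : κ⁻¹ * (25 * η) = (5 ^ 2 / κ) * η := by ring
      linarith
  -- the central strip
  set S : Set Torus2 :=
    Metric.closedBall ((1/4:ℝ) : AddCircle (1:ℝ)) (1/12) ×ˢ (Set.univ : Set (AddCircle (1:ℝ)))
    with hS
  have hvolS : volume S = ENNReal.ofReal (1/6) := by
    rw [hS, Measure.volume_eq_prod, MeasureTheory.Measure.prod_prod,
      AddCircle.volume_closedBall 1 (1/12), AddCircle.measure_univ]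
    norm_num
  have hne : (S \ Bad).Nonempty := by
    refine MeasureTheory.nonempty_of_measure_ne_zero (μ := (volume : Measure Torus2)) (fun h0 => ?_)
    have h1 : volume S ≤ volume (S ∩ Bad) + volume (S \ Bad) :=
      measure_le_inter_add_diff _ _ _
    rw [h0, add_zero] at h1
    have h2 : volume S ≤ volume Bad := h1.trans (measure_mono Set.inter_subset_right)
    rw [hvolS] at h2
    exact absurd (h2.trans_lt hvolBad) (lt_irrefl _)
  obtain ⟨xb, hxS, hxBad⟩ := hne
  have hxU : Φ xb ∉ U := fun h => hxBad (Or.inl h)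
  have hxH : Φ xb ∉ H := fun h => hxBad (Or.inr h)
  -- coordinates of xb
  obtain ⟨a, haI, ha⟩ := exists_rep_Ico xb.1
  obtain ⟨b, hbI, hb⟩ := exists_rep_Ico xb.2
  have hdista : dist xb.1 ((1/4:ℝ) : AddCircle (1:ℝ)) ≤ 1/12 := hxS.1
  have haIcc : a ∈ Set.Icc (1/6:ℝ) (1/3) := by
    rw [← ha, circle_dist_eq a (1/4)] at hdista
    set k := round (a - 1/4) with hk
    have h1 : |(a - 1/4) - (k:ℝ)| ≤ 1/12 := hdista
    have h2 := abs_le.1 h1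
    have hklt : (k:ℝ) < 1 := by have := haI.2; linarith
    have hkgt : (-1:ℝ) < (k:ℝ) := by have := haI.1; linarith
    have hk0 : k = 0 := by
      have h3 : k < 1 := by exact_mod_cast hklt
      have h4 : -1 < k := by exact_mod_cast hkgt
      omega
    rw [hk0] at h2
    push_cast at h2
    constructor <;> linarith [h2.1, h2.2]
  have hxleft : xb ∈ leftHalf := by
    refine ⟨a, ⟨by linarith [haIcc.1], by linarith [haIcc.2]⟩, b, hbI, ?_⟩
    rw [ha, hb]
  -- Φ xb is not in the high-density set, extract zb
  have hxD : ¬ (c * volume (Metric.ball (Φ xb) ε) ≤ volume (Metric.ball (Φ xb) ε ∩ H)) :=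
    fun h => hxU (hDU h)
  have hlt : volume (Metric.ball (Φ xb) ε ∩ H) < c * volume (Metric.ball (Φ xb) ε) :=
    lt_of_not_ge hxD
  set X : Set Torus2 := Metric.ball (Φ xb) ε ∩ (Φ '' rightHalf) with hX
  have hkey : volume (X \ H) ≠ 0 := by
    intro h0
    have h1 : volume X ≤ volume (X ∩ H) + volume (X \ H) := measure_le_inter_add_diff _ _ _
    rw [h0, add_zero] at h1
    have h2 : volume (X ∩ H) ≤ volume (Metric.ball (Φ xb) ε ∩ H) :=
      measure_mono (fun z hz => ⟨hz.1.1, hz.2⟩)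
    have h3 : c * volume (Metric.ball (Φ xb) ε) ≤ volume X := hmix xb hxleft
    have h4 : c * volume (Metric.ball (Φ xb) ε) < c * volume (Metric.ball (Φ xb) ε) :=
      lt_of_le_of_lt ((h3.trans h1).trans h2) hlt
    exact absurd h4 (lt_irrefl _)
  obtain ⟨zb, hzX, hzH⟩ := MeasureTheory.nonempty_of_measure_ne_zero (μ := (volume : Measure Torus2)) hkey
  obtain ⟨hzball, w, hw, hwz⟩ := hzX
  -- Lipschitz estimate
  have hd : dist (Ψ (Φ xb)) (Ψ zb) ≤ (Real.toNNReal M : ℝ) * dist (Φ xb) zb :=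
    hΨ_lip.dist_le_mul _ hxH _ hzH
  rw [hΨΦ xb] at hd
  have hΨz : Ψ zb = w := by rw [← hwz, hΨΦ]
  rw [hΨz, Real.coe_toNNReal M hM.le] at hd
  have hdistz : dist (Φ xb) zb ≤ ε := by
    have := Metric.mem_ball.1 hzball
    rw [dist_comm] at this
    exact this.le
  -- lower bound on dist xb w
  obtain ⟨b₁, hb₁, b₂, hb₂, hwEq⟩ := hw
  have hlow : (1/6:ℝ) ≤ dist xb w := by
    have h1 : dist xb.1 w.1 ≤ dist xb w := by
      rw [Prod.dist_eq]; exact le_max_left _ _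
    have h2 : (1/6:ℝ) ≤ dist xb.1 w.1 := by
      rw [← ha, hwEq]
      exact circle_dist_lower haIcc hb₁
    linarith
  have hfinal : (1/6:ℝ) ≤ M * ε := by
    have : dist xb w ≤ M * ε := hd.trans (by nlinarith)
    linarith
  rw [div_le_iff₀ (by positivity : (0:ℝ) < 6*M)]
  nlinarith
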